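/- Define a_{m,n} := 2m sin(π/m) √(1 + 4n² sin⁴(π/(2m))) for positive integers m, n (the area of the Schwarz–Peano polyhedral surface 𝒮_{m,n} inscribed in the cylinder of height 1 and radius 1). Then, as m → ∞: (i) a_{m,m} → 2π; (ii) a_{m,m²} → 2π √(1 + π⁴/4); (iii) a_{m,m³} → +∞. Consequently the limit of a_{m,n} as m, n → ∞ jointly does not exist, so the area of the inscribed polyhedral surfaces has no limit (the Schwarz–Peano counterexample to Serret's definition of surface area). -/

import Mathlib

open Real Filter Topology

/-- The area of the Schwarz–Peano polyhedral surface `𝒮_{m,n}` inscribed in the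
cylinder of height 1 and radius 1. -/
noncomputable def schwarzArea (m n : ℕ) : ℝ :=
  2 * m * Real.sin (π / m) * Real.sqrt (1 + 4 * n ^ 2 * Real.sin (π / (2 * m)) ^ 4)

lemma sin_div_self_tendsto : Tendsto (fun x : ℝ => Real.sin x / x) (𝓝[≠] 0) (𝓝 1) := by
  have h := Real.hasDerivAt_sin 0
  rw [Real.cos_zero] at h
  have h2 := hasDerivAt_iff_tendsto_slope.mp h
  refine h2.congr' ?_
  filter_upwards [self_mem_nhdsWithin] with x hx
  simp [slope_def_field, Real.sin_zero]

lemma mul_sin_div_tendsto (c : ℝ) (hc : 0 < c) :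
    Tendsto (fun m : ℕ => (m : ℝ) * Real.sin (c / m)) atTop (𝓝 c) := by
  have h1 : Tendsto (fun m : ℕ => c / (m : ℝ)) atTop (𝓝[≠] 0) := by
    refine tendsto_nhdsWithin_iff.mpr ⟨tendsto_const_div_atTop_nhds_zero_nat c, ?_⟩
    filter_upwards [eventually_gt_atTop 0] with m hm
    have hm' : (0:ℝ) < m := by exact_mod_cast hm
    exact (div_pos hc hm').ne'
  have h2 := sin_div_self_tendsto.comp h1
  have h3 : Tendsto (fun m : ℕ => c * (Real.sin (c / m) / (c / m))) atTop (𝓝 (c * 1)) :=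
    tendsto_const_nhds.mul h2
  rw [mul_one] at h3
  refine h3.congr' ?_
  filter_upwards [eventually_gt_atTop 0] with m hm
  have hm' : (m:ℝ) ≠ 0 := by
    have : (0:ℝ) < m := by exact_mod_cast hm
    exact this.ne'
  field_simp

/-- The Schwarz–Peano counterexample to Serret's definition of surface area:
as `m → ∞`, `a_{m,m} → 2π`, `a_{m,m²} → 2π√(1 + π⁴/4)` and `a_{m,m³} → +∞`;
hence the areas of the inscribed polyhedral surfaces `𝒮_{m,n}` have no limit as
`m, n → ∞` jointly. -/
theorem schwarz_peano_counterexample :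
    Tendsto (fun m : ℕ => schwarzArea m m) atTop (nhds (2 * π)) ∧
      Tendsto (fun m : ℕ => schwarzArea m (m ^ 2)) atTop
        (nhds (2 * π * Real.sqrt (1 + π ^ 4 / 4))) ∧
      Tendsto (fun m : ℕ => schwarzArea m (m ^ 3)) atTop atTop := by
  have hf : Tendsto (fun m : ℕ => (m:ℝ) * Real.sin (π / m)) atTop (𝓝 π) :=
    mul_sin_div_tendsto π Real.pi_pos
  have hs : Tendsto (fun m : ℕ => (m:ℝ) * Real.sin (π / 2 / m)) atTop (𝓝 (π / 2)) :=
    mul_sin_div_tendsto (π / 2) (by positivity)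
  have hinv : Tendsto (fun m : ℕ => 1 / (m:ℝ) ^ 2) atTop (𝓝 0) := by
    have := (tendsto_const_div_atTop_nhds_zero_nat (1:ℝ)).mul
      (tendsto_const_div_atTop_nhds_zero_nat (1:ℝ))
    simpa [pow_two, div_mul_div_comm] using this
  refine ⟨?_, ?_, ?_⟩
  · -- a_{m,m} → 2π
    have inner_t : Tendsto
        (fun m : ℕ => 1 + 4 * ((m:ℝ) * Real.sin (π / 2 / m)) ^ 4 * (1 / (m:ℝ) ^ 2))
        atTop (𝓝 (1 + 4 * (π / 2) ^ 4 * 0)) :=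
      tendsto_const_nhds.add ((tendsto_const_nhds.mul (hs.pow 4)).mul hinv)
    have h1 : Tendsto
        (fun m : ℕ => 2 * ((m:ℝ) * Real.sin (π / m)) *
          Real.sqrt (1 + 4 * ((m:ℝ) * Real.sin (π / 2 / m)) ^ 4 * (1 / (m:ℝ) ^ 2)))
        atTop (𝓝 (2 * π * Real.sqrt (1 + 4 * (π / 2) ^ 4 * 0))) :=
      ((tendsto_const_nhds (x := (2:ℝ))).mul hf).mul inner_t.sqrt
    have h1' : Tendsto
        (fun m : ℕ => 2 * ((m:ℝ) * Real.sin (π / m)) *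
          Real.sqrt (1 + 4 * ((m:ℝ) * Real.sin (π / 2 / m)) ^ 4 * (1 / (m:ℝ) ^ 2)))
        atTop (𝓝 (2 * π)) := by
      convert h1 using 2
      norm_num
    refine (h1'.congr' ?_)
    filter_upwards [eventually_gt_atTop 0] with m hm
    have hm' : (m:ℝ) ≠ 0 := by
      have : (0:ℝ) < m := by exact_mod_cast hm
      exact this.ne'
    unfold schwarzArea
    rw [div_div]
    congr 1
    · ring
    · congr 1
      field_simp
  · -- a_{m,m²} → 2π√(1+π⁴/4)
    have inner_t : Tendsto
        (fun m : ℕ => 1 + 4 * ((m:ℝ) * Real.sin (π / 2 / m)) ^ 4)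
        atTop (𝓝 (1 + 4 * (π / 2) ^ 4)) :=
      tendsto_const_nhds.add (tendsto_const_nhds.mul (hs.pow 4))
    have h1 : Tendsto
        (fun m : ℕ => 2 * ((m:ℝ) * Real.sin (π / m)) *
          Real.sqrt (1 + 4 * ((m:ℝ) * Real.sin (π / 2 / m)) ^ 4))
        atTop (𝓝 (2 * π * Real.sqrt (1 + 4 * (π / 2) ^ 4))) :=
      ((tendsto_const_nhds (x := (2:ℝ))).mul hf).mul inner_t.sqrt
    have h1' : Tendsto
        (fun m : ℕ => 2 * ((m:ℝ) * Real.sin (π / m)) *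
          Real.sqrt (1 + 4 * ((m:ℝ) * Real.sin (π / 2 / m)) ^ 4))
        atTop (𝓝 (2 * π * Real.sqrt (1 + π ^ 4 / 4))) := by
      convert h1 using 3
      ring
    refine (h1'.congr' ?_)
    filter_upwards [eventually_gt_atTop 0] with m hm
    unfold schwarzArea
    rw [div_div]
    congr 1
    · ring
    · congr 1
      push_cast
      ring
  · -- a_{m,m³} → ∞
    have hf1 : ∀ᶠ m : ℕ in atTop, 1 < (m:ℝ) * Real.sin (π / m) :=
      hf.eventually (eventually_gt_nhds (by nlinarith [Real.pi_gt_three]))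
    have hs1 : ∀ᶠ m : ℕ in atTop, 1 < (m:ℝ) * Real.sin (π / 2 / m) :=
      hs.eventually (eventually_gt_nhds (by nlinarith [Real.pi_gt_three]))
    refine tendsto_atTop_mono' atTop ?_ tendsto_natCast_atTop_atTop
    filter_upwards [eventually_ge_atTop 1, hf1, hs1] with m hm hF hS
    have hm1 : (1:ℝ) ≤ m := by exact_mod_cast hm
    unfold schwarzArea
    set A := Real.sin (π / (2 * (m:ℝ))) with hA
    have hSA : 1 < (m:ℝ) * A := by rwa [div_div] at hS
    have hX : 4 * ((m:ℝ) ^ 3 : ℝ) ^ 2 * A ^ 4 = (2 * (m:ℝ) ^ 3 * A ^ 2) ^ 2 := by ring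
    have hXcast : (((m ^ 3 : ℕ)):ℝ) = (m:ℝ) ^ 3 := by push_cast; ring
    have hsqX : Real.sqrt (4 * ((m:ℝ) ^ 3) ^ 2 * A ^ 4) = 2 * (m:ℝ) ^ 3 * A ^ 2 := by
      rw [hX, Real.sqrt_sq (by positivity)]
    have hle : Real.sqrt (4 * ((m:ℝ) ^ 3) ^ 2 * A ^ 4) ≤
        Real.sqrt (1 + 4 * ((m:ℝ) ^ 3) ^ 2 * A ^ 4) :=
      Real.sqrt_le_sqrt (by nlinarith)
    have hMA2 : 1 ≤ ((m:ℝ) * A) ^ 2 := by nlinarith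
    have hm3A : 2 * (m:ℝ) ≤ 2 * (m:ℝ) ^ 3 * A ^ 2 := by nlinarith
    have hsq_nonneg : 0 ≤ Real.sqrt (1 + 4 * ((m:ℝ) ^ 3) ^ 2 * A ^ 4) := Real.sqrt_nonneg _
    calc (m:ℝ) ≤ 2 * (m:ℝ) := by linarith
      _ ≤ 2 * (m:ℝ) ^ 3 * A ^ 2 := hm3A
      _ = Real.sqrt (4 * ((m:ℝ) ^ 3) ^ 2 * A ^ 4) := hsqX.symm
      _ ≤ Real.sqrt (1 + 4 * ((m:ℝ) ^ 3) ^ 2 * A ^ 4) := hle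
      _ = 1 * Real.sqrt (1 + 4 * ((m:ℝ) ^ 3) ^ 2 * A ^ 4) := (one_mul _).symm
      _ ≤ (2 * ((m:ℝ) * Real.sin (π / m))) *
          Real.sqrt (1 + 4 * ((m:ℝ) ^ 3) ^ 2 * A ^ 4) := by
        apply mul_le_mul_of_nonneg_right _ hsq_nonneg
        linarith
      _ = 2 * (m:ℝ) * Real.sin (π / m) *
          Real.sqrt (1 + 4 * (((m ^ 3 : ℕ)):ℝ) ^ 2 * A ^ 4) := by
        rw [hXcast]; ring
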